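/- arXiv:2110.14609 — 2 statements merged into one kernel-verified Lean document; each statement's English description precedes it below -/
import Mathlib

section
/- Suppose the graph G = (V, E) is connected, Q ∈ ℝ^{|E|×|V|} is its oriented incidence matrix, and T = {τ_1, …, τ_d} is a row covering of Q in which every block τ_i is an independent edge set of G (no two edges in τ_i share a node), with r the minimum number of blocks containing any single edge. Then the block gossip method with blocks determined by T satisfies E‖c_k − c*‖² ≤ (1 − r·α(G)/(2d))^k ‖c − c*‖², where c is the initial vector of node values, c* = mean(c)·1, and α(G) is the algebraic connectivity of G. -/
open Matrix

noncomputable section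

open Classical in

/-- The Moore–Penrose pseudoinverse of a real matrix, defined via the four Penrose
conditions (which always admit a unique solution). -/
def mpinv {m n : Type*} [Fintype m] [Fintype n] (A : Matrix m n ℝ) : Matrix n m ℝ :=
  if h : ∃ B : Matrix n m ℝ,
      A * B * A = A ∧ B * A * B = B ∧ (A * B)ᵀ = A * B ∧ (B * A)ᵀ = B * A
  then h.choose else 0

/-- Smallest nonzero eigenvalue of a square real matrix. -/
def lambdaMinPos {k : Type*} [Fintype k] [DecidableEq k] (M : Matrix k k ℝ) : ℝ :=
  sInf {μ : ℝ | μ ≠ 0 ∧ μ ∈ spectrum ℝ M}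

/-- Largest eigenvalue of a square real matrix. -/
def lambdaMax {k : Type*} [Fintype k] [DecidableEq k] (M : Matrix k k ℝ) : ℝ :=
  sSup (spectrum ℝ M)

/-- Squared Euclidean norm of a vector. -/
def sqNorm {k : Type*} [Fintype k] (v : k → ℝ) : ℝ := ∑ i, (v i) ^ 2

/-- The row submatrix of `A` with rows indexed by the subset `τ`. -/
def rowSub {ι κ : Type*} (A : Matrix ι κ ℝ) (τ : Finset ι) : Matrix τ κ ℝ :=
  Matrix.of fun i j => A i.1 j

/-- `T = (τ_1, …, τ_d)` is a `(d, a, β, r, R)` row covering of `A`: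
the blocks cover all row indices, `a` lower-bounds the smallest nonzero eigenvalue and `β`
upper-bounds the largest eigenvalue of each `A_τ A_τᵀ`, and `r` (resp. `R`) is the minimum
(resp. maximum) number of blocks containing any single row. -/
structure IsRowCovering {ι κ : Type*} [Fintype ι] [DecidableEq ι] [Fintype κ] {d : ℕ}
    (A : Matrix ι κ ℝ) (τ : Fin d → Finset ι) (a β : ℝ) (r R : ℕ) : Prop where
  cover : ∀ i : ι, ∃ l, i ∈ τ l
  alpha_le : ∀ l, a ≤ lambdaMinPos (rowSub A (τ l) * (rowSub A (τ l))ᵀ)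
  le_beta : ∀ l, lambdaMax (rowSub A (τ l) * (rowSub A (τ l))ᵀ) ≤ β
  r_le : ∀ i : ι, r ≤ (Finset.univ.filter fun l => i ∈ τ l).card
  r_attained : ∃ i : ι, (Finset.univ.filter fun l => i ∈ τ l).card = r
  le_R : ∀ i : ι, (Finset.univ.filter fun l => i ∈ τ l).card ≤ R
  R_attained : ∃ i : ι, (Finset.univ.filter fun l => i ∈ τ l).card = R

/-- One step of the block Kaczmarz method with block `τ`:
`x ↦ x + A_τ† (b_τ − A_τ x)`. -/
def kaczStep {ι κ : Type*} [Fintype ι] [Fintype κ] (A : Matrix ι κ ℝ) (b : ι → ℝ)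
    (τ : Finset ι) (x : κ → ℝ) : κ → ℝ :=
  x + (mpinv (rowSub A τ)).mulVec (fun i : τ => b i.1 - (rowSub A τ).mulVec x i)

/-- The iterates of the block (randomized) Kaczmarz method, as a function of the sequence
`σ` of block choices: `x_k = x_{k-1} + A_τ† (b_τ − A_τ x_{k-1})` with `τ = τs (σ k)`. -/
def kaczIter {ι κ : Type*} [Fintype ι] [Fintype κ] {d : ℕ} (A : Matrix ι κ ℝ) (b : ι → ℝ)
    (τs : Fin d → Finset ι) (x0 : κ → ℝ) : ∀ k : ℕ, (Fin k → Fin d) → κ → ℝ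
  | 0, _ => x0
  | (k + 1), σ => kaczStep A b (τs (σ (Fin.last k))) (kaczIter A b τs x0 k (σ ∘ Fin.castSucc))

/-- `Q` is an oriented incidence matrix of the graph `G`, with `hd e` and `tl e` the head
and tail of the (arbitrary) orientation of the edge indexed by the row `e`: the rows of
`Q` are in bijection with the edges of `G`, and the row of edge `{i, j}` has entry `+1`
in column `i`, `−1` in column `j`, and `0` elsewhere. -/
def IsOrientedIncidence {V E : Type*} [DecidableEq V] (G : SimpleGraph V)
    (hd tl : E → V) (Q : Matrix E V ℝ) : Prop :=
  (∀ e, G.Adj (hd e) (tl e)) ∧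
  (∀ a b : V, G.Adj a b → ∃! e : E, s(hd e, tl e) = s(a, b)) ∧
  (∀ e v, Q e v = if v = hd e then 1 else if v = tl e then -1 else 0)

/-- The set of vertices incident to some edge of the block `τ`. -/
def endpts {V E : Type*} [DecidableEq V] (hd tl : E → V) (τ : Finset E) : Finset V :=
  τ.biUnion fun e => {hd e, tl e}

/-- The edge-induced subgraph determined by the block `τ` is connected: any two of
its vertices are joined by a walk using only edges of `τ`. -/
def IsConnectedBlock {V E : Type*} [DecidableEq V] (hd tl : E → V) (τ : Finset E) : Prop :=
  ∀ a ∈ endpts hd tl τ, ∀ b ∈ endpts hd tl τ,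
    (SimpleGraph.fromEdgeSet {p : Sym2 V | ∃ e ∈ τ, s(hd e, tl e) = p}).Reachable a b

/-- `τ` is an independent edge set: no two (distinct) edges of `τ` share a node. -/
def IsIndepEdgeSet {V E : Type*} (hd tl : E → V) (τ : Finset E) : Prop :=
  ∀ e ∈ τ, ∀ e' ∈ τ, e ≠ e' →
    hd e ≠ hd e' ∧ hd e ≠ tl e' ∧ tl e ≠ hd e' ∧ tl e ≠ tl e'

/-! ### Auxiliary lemmas -/

section Aux

open scoped RealInnerProductSpace

lemma penrose_unique {m n : Type*} [Fintype m] [Fintype n] (A : Matrix m n ℝ)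
    (B C : Matrix n m ℝ)
    (hB1 : A * B * A = A) (hB2 : B * A * B = B) (hB3 : (A * B)ᵀ = A * B) (hB4 : (B * A)ᵀ = B * A)
    (hC1 : A * C * A = A) (hC2 : C * A * C = C) (hC3 : (A * C)ᵀ = A * C) (hC4 : (C * A)ᵀ = C * A) :
    B = C := by
  have hAt : Aᵀ = Aᵀ * (A * C) := by
    conv_lhs => rw [← hC1]
    rw [Matrix.transpose_mul, hC3]
  have hAt' : Aᵀ = (C * A) * Aᵀ := by
    conv_lhs => rw [← hC1]
    rw [Matrix.mul_assoc, Matrix.transpose_mul, hC4]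
  have h1 : A * B = A * C := by
    calc A * B = (A * B)ᵀ := hB3.symm
    _ = Bᵀ * Aᵀ := Matrix.transpose_mul _ _
    _ = Bᵀ * (Aᵀ * (A * C)) := by rw [← hAt]
    _ = (Bᵀ * Aᵀ) * (A * C) := by rw [Matrix.mul_assoc]
    _ = (A * B)ᵀ * (A * C) := by rw [Matrix.transpose_mul]
    _ = (A * B) * (A * C) := by rw [hB3]
    _ = (A * B * A) * C := by simp only [Matrix.mul_assoc]
    _ = A * C := by rw [hB1]
  have h2 : B * A = C * A := by
    calc B * A = (B * A)ᵀ := hB4.symm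
    _ = Aᵀ * Bᵀ := Matrix.transpose_mul _ _
    _ = ((C * A) * Aᵀ) * Bᵀ := by rw [← hAt']
    _ = (C * A) * (Aᵀ * Bᵀ) := by rw [Matrix.mul_assoc]
    _ = (C * A) * (B * A)ᵀ := by rw [Matrix.transpose_mul]
    _ = (C * A) * (B * A) := by rw [hB4]
    _ = C * (A * B * A) := by simp only [Matrix.mul_assoc]
    _ = C * A := by rw [hB1]
  calc B = B * A * B := hB2.symm
  _ = C * A * B := by rw [h2]
  _ = C * (A * B) := Matrix.mul_assoc _ _ _
  _ = C * (A * C) := by rw [h1]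
  _ = C * A * C := (Matrix.mul_assoc _ _ _).symm
  _ = C := hC2

lemma mpinv_eq {m n : Type*} [Fintype m] [Fintype n] (A : Matrix m n ℝ) (B : Matrix n m ℝ)
    (h1 : A * B * A = A) (h2 : B * A * B = B) (h3 : (A * B)ᵀ = A * B) (h4 : (B * A)ᵀ = B * A) :
    mpinv A = B := by
  classical
  have h : ∃ B : Matrix n m ℝ,
      A * B * A = A ∧ B * A * B = B ∧ (A * B)ᵀ = A * B ∧ (B * A)ᵀ = B * A := ⟨B, h1, h2, h3, h4⟩
  rw [mpinv, dif_pos h]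
  obtain ⟨c1, c2, c3, c4⟩ := h.choose_spec
  exact penrose_unique A h.choose B c1 c2 c3 c4 h1 h2 h3 h4

lemma mpinv_of_orth_rows {m n : Type*} [Fintype m] [Fintype n] [DecidableEq m]
    (A : Matrix m n ℝ) (h : A * Aᵀ = (2:ℝ) • 1) : mpinv A = (2:ℝ)⁻¹ • Aᵀ := by
  have hAB : A * ((2:ℝ)⁻¹ • Aᵀ) = 1 := by
    rw [Matrix.mul_smul, h, smul_smul]; norm_num
  apply mpinv_eq
  · rw [hAB, Matrix.one_mul]
  · rw [Matrix.mul_assoc, hAB, Matrix.mul_one]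
  · rw [hAB, Matrix.transpose_one]
  · rw [Matrix.smul_mul, Matrix.transpose_smul, Matrix.transpose_mul, Matrix.transpose_transpose]

lemma dot_transpose_mulVec {m n : Type*} [Fintype m] [Fintype n] (A : Matrix m n ℝ)
    (x : n → ℝ) (y : m → ℝ) : x ⬝ᵥ (Aᵀ *ᵥ y) = (A *ᵥ x) ⬝ᵥ y := by
  simp only [dotProduct, mulVec, dotProduct, transpose_apply, Finset.mul_sum, Finset.sum_mul]
  rw [Finset.sum_comm]
  refine Finset.sum_congr rfl fun i _ => Finset.sum_congr rfl fun j _ => by ring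

lemma sqNorm_eq_dot {k : Type*} [Fintype k] (v : k → ℝ) : sqNorm v = v ⬝ᵥ v := by
  simp [sqNorm, dotProduct, sq]

lemma sqNorm_nonneg {k : Type*} [Fintype k] (v : k → ℝ) : 0 ≤ sqNorm v :=
  Finset.sum_nonneg fun i _ => sq_nonneg _

lemma sqNorm_eq_zero {k : Type*} [Fintype k] {v : k → ℝ} (h : sqNorm v = 0) : v = 0 := by
  funext j
  have := (Finset.sum_eq_zero_iff_of_nonneg (fun i _ => sq_nonneg (v i))).mp h j (Finset.mem_univ j)
  exact pow_eq_zero_iff (by norm_num) |>.mp this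

lemma step_sqNorm {m n : Type*} [Fintype m] [Fintype n] [DecidableEq m]
    (A : Matrix m n ℝ) (h : A * Aᵀ = (2:ℝ) • 1) (v : n → ℝ) :
    sqNorm (v - (2:ℝ)⁻¹ • (Aᵀ *ᵥ (A *ᵥ v))) = sqNorm v - (2:ℝ)⁻¹ * sqNorm (A *ᵥ v) := by
  set w := A *ᵥ v with hw
  set u := Aᵀ *ᵥ w with hu
  have hu1 : v ⬝ᵥ u = w ⬝ᵥ w := by rw [hu, dot_transpose_mulVec]
  have hu2 : u ⬝ᵥ v = w ⬝ᵥ w := by rw [dotProduct_comm, hu1]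
  have hu3 : u ⬝ᵥ u = 2 * (w ⬝ᵥ w) := by
    rw [hu, dot_transpose_mulVec, Matrix.mulVec_mulVec, h, Matrix.smul_mulVec,
      Matrix.one_mulVec, smul_dotProduct, smul_eq_mul]
  rw [sqNorm_eq_dot, sqNorm_eq_dot, sqNorm_eq_dot]
  simp only [sub_dotProduct, dotProduct_sub, smul_dotProduct, dotProduct_smul, smul_eq_mul,
    hu1, hu2, hu3]
  ring

lemma euclid_inner_eq_dot {V : Type*} [Fintype V] (x y : EuclideanSpace ℝ V) :
    ⟪x, y⟫ = (x : V → ℝ) ⬝ᵥ (y : V → ℝ) := by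
  simp [PiLp.inner_apply, RCLike.inner_apply, dotProduct, mul_comm]

lemma quad_lower_bound {V E : Type*} [Fintype V] [DecidableEq V] [Fintype E]
    (Q : Matrix E V ℝ)
    (hker : ∀ u : V → ℝ, Q *ᵥ u = 0 → ∀ a b : V, u a = u b)
    (v : V → ℝ) (hv : ∑ a, v a = 0) [Nonempty V] :
    lambdaMinPos (Qᵀ * Q) * sqNorm v ≤ sqNorm (Q *ᵥ v) := by
  set L := Qᵀ * Q with hLdef
  have hL : L.IsHermitian := by
    have := Matrix.isHermitian_conjTranspose_mul_self Q
    simpa using this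
  have hLsymm : Lᵀ = L := by
    have := hL
    simpa [Matrix.IsHermitian] using this
  set B := hL.eigenvectorBasis with hB
  set lam := hL.eigenvalues with hlam
  set c : V → ℝ := fun i => (B i : V → ℝ) ⬝ᵥ v with hc
  have hLdot : ∀ x y : V → ℝ, x ⬝ᵥ (L *ᵥ y) = (L *ᵥ x) ⬝ᵥ y := by
    intro x y
    conv_lhs => rw [← hLsymm]
    exact dot_transpose_mulVec L x y
  have hmul : ∀ i, L *ᵥ (B i : V → ℝ) = lam i • (B i : V → ℝ) := fun i =>
    hL.mulVec_eigenvectorBasis i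
  have hBv : ∀ i, (B i : V → ℝ) ⬝ᵥ (L *ᵥ v) = lam i * c i := by
    intro i
    rw [hLdot, hmul i]
    simp only [hc]
    exact smul_dotProduct (lam i) (B i) v
  have exp1 : sqNorm v = ∑ i, c i * c i := by
    have := B.sum_inner_mul_inner (WithLp.toLp 2 v) (WithLp.toLp 2 v)
    rw [sqNorm_eq_dot, show v ⬝ᵥ v = ⟪WithLp.toLp 2 v, WithLp.toLp 2 v⟫ from
      (euclid_inner_eq_dot _ _).symm, ← this]
    refine Finset.sum_congr rfl fun i _ => ?_
    rw [euclid_inner_eq_dot, euclid_inner_eq_dot, WithLp.ofLp_toLp, dotProduct_comm]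
  have exp2 : sqNorm (Q *ᵥ v) = ∑ i, lam i * (c i * c i) := by
    have hQL : sqNorm (Q *ᵥ v) = v ⬝ᵥ (L *ᵥ v) := by
      rw [sqNorm_eq_dot, hLdef, ← Matrix.mulVec_mulVec, dot_transpose_mulVec]
    have := B.sum_inner_mul_inner (WithLp.toLp 2 v) (WithLp.toLp 2 (L *ᵥ v))
    rw [hQL, show v ⬝ᵥ (L *ᵥ v) = ⟪WithLp.toLp 2 v, WithLp.toLp 2 (L *ᵥ v)⟫ from
      (euclid_inner_eq_dot (WithLp.toLp 2 v) (WithLp.toLp 2 (L *ᵥ v))).symm, ← this]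
    refine Finset.sum_congr rfl fun i _ => ?_
    rw [euclid_inner_eq_dot, euclid_inner_eq_dot, WithLp.ofLp_toLp, WithLp.ofLp_toLp, hBv i,
      dotProduct_comm]
    ring
  have hbdd : BddBelow {μ : ℝ | μ ≠ 0 ∧ μ ∈ spectrum ℝ L} :=
    ((Matrix.finite_spectrum L).subset fun μ hμ => hμ.2).bddBelow
  have term : ∀ i, lambdaMinPos L * (c i * c i) ≤ lam i * (c i * c i) := by
    intro i
    by_cases h0 : lam i = 0
    · have hQBi : Q *ᵥ (B i : V → ℝ) = 0 := by
        have h1 : L *ᵥ (B i : V → ℝ) = 0 := by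
          rw [hmul i, h0]; simp
        have h2 : sqNorm (Q *ᵥ (B i : V → ℝ)) = 0 := by
          rw [sqNorm_eq_dot, ← dot_transpose_mulVec, Matrix.mulVec_mulVec, ← hLdef, h1,
            dotProduct_zero]
        exact sqNorm_eq_zero h2
      have hconst := hker _ hQBi
      obtain ⟨a0⟩ := ‹Nonempty V›
      have hci : c i = 0 := by
        have : c i = ∑ a, (B i : V → ℝ) a0 * v a := by
          rw [hc]
          exact Finset.sum_congr rfl fun a _ => by rw [hconst a a0]
        rw [this, ← Finset.mul_sum, hv, mul_zero]
      rw [hci]; simp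
    · have : lambdaMinPos L ≤ lam i := by
        apply csInf_le hbdd
        exact ⟨h0, hL.eigenvalues_mem_spectrum_real i⟩
      exact mul_le_mul_of_nonneg_right this (mul_self_nonneg _)
  calc lambdaMinPos L * sqNorm v = ∑ i, lambdaMinPos L * (c i * c i) := by
        rw [exp1, Finset.mul_sum]
  _ ≤ ∑ i, lam i * (c i * c i) := Finset.sum_le_sum fun i _ => term i
  _ = sqNorm (Q *ᵥ v) := exp2.symm

end Aux

/-! ### Graph-specific lemmas -/

section Graph

variable {V E : Type*} [Fintype V] [DecidableEq V] [Fintype E] [DecidableEq E]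
  {G : SimpleGraph V} {hd tl : E → V} {Q : Matrix E V ℝ}

variable (hQ : IsOrientedIncidence G hd tl Q)
include hQ

lemma hd_ne_tl (e : E) : hd e ≠ tl e := (hQ.1 e).ne

lemma row_mul_sum (e : E) (f : V → ℝ) :
    ∑ v, Q e v * f v = f (hd e) - f (tl e) := by
  have h0 : ∀ v, v ∉ ({hd e, tl e} : Finset V) → Q e v * f v = 0 := by
    intro v hv
    simp only [Finset.mem_insert, Finset.mem_singleton, not_or] at hv
    rw [hQ.2.2, if_neg hv.1, if_neg hv.2, zero_mul]
  rw [← Finset.sum_subset (Finset.subset_univ ({hd e, tl e} : Finset V))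
    (fun v _ hv => h0 v hv)]
  rw [Finset.sum_pair (hd_ne_tl hQ e)]
  rw [hQ.2.2, hQ.2.2, if_pos rfl, if_neg (hd_ne_tl hQ e).symm, if_pos rfl]
  ring

lemma row_sum_zero (e : E) : ∑ v, Q e v = 0 := by
  have := row_mul_sum hQ e (fun _ => (1:ℝ))
  simpa using this

lemma mulVec_apply_eq (x : V → ℝ) (e : E) : (Q *ᵥ x) e = x (hd e) - x (tl e) := by
  rw [mulVec, dotProduct, row_mul_sum hQ]

lemma sum_transpose_mulVec (τ : Finset E) (y : τ → ℝ) :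
    ∑ v, ((rowSub Q τ)ᵀ *ᵥ y) v = 0 := by
  simp only [mulVec, dotProduct, transpose_apply]
  rw [Finset.sum_comm]
  refine Finset.sum_eq_zero fun e _ => ?_
  have : ∀ v, rowSub Q τ e v * y e = Q e.1 v * (y e * 1) := fun v => by
    simp [rowSub]
  simp only [this, ← Finset.sum_mul]
  rw [row_sum_zero hQ]
  ring

lemma gram_eq (τ : Finset E) (hind : IsIndepEdgeSet hd tl τ) :
    rowSub Q τ * (rowSub Q τ)ᵀ = (2:ℝ) • (1 : Matrix τ τ ℝ) := by
  ext e e'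
  rw [mul_apply]
  simp only [transpose_apply, rowSub, Matrix.smul_apply, Matrix.one_apply, smul_eq_mul, of_apply]
  have key : ∑ v, Q e.1 v * Q e'.1 v = Q e'.1 (hd e.1) - Q e'.1 (tl e.1) :=
    row_mul_sum hQ e.1 (Q e'.1)
  rw [key]
  by_cases h : e = e'
  · subst h
    rw [hQ.2.2, hQ.2.2, if_pos rfl, if_neg (hd_ne_tl hQ e.1).symm, if_pos rfl]
    norm_num
  · have hne : e.1 ≠ e'.1 := fun hc => h (Subtype.ext hc)
    obtain ⟨h1, h2, h3, h4⟩ := hind e.1 e.2 e'.1 e'.2 hne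
    rw [hQ.2.2, hQ.2.2, if_neg h1, if_neg h2, if_neg h3, if_neg h4, if_neg h]
    ring

lemma mulVec_zero_const (hG : G.Connected) (u : V → ℝ) (hu : Q *ᵥ u = 0) :
    ∀ a b : V, u a = u b := by
  have hadj : ∀ a b : V, G.Adj a b → u a = u b := by
    intro a b hab
    obtain ⟨e, he, -⟩ := hQ.2.1 a b hab
    have h0 : (Q *ᵥ u) e = 0 := by rw [hu]; rfl
    rw [mulVec_apply_eq hQ] at h0
    rw [Sym2.eq_iff] at he
    rcases he with ⟨hh1, hh2⟩ | ⟨hh1, hh2⟩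
    · rw [← hh1, ← hh2]; linarith
    · rw [← hh1, ← hh2]; linarith
  intro a b
  obtain ⟨w⟩ := hG.preconnected a b
  induction w with
  | nil => rfl
  | cons h p ih => exact (hadj _ _ h).trans ih

/-- The explicit form of one gossip step for an independent edge block. -/
lemma kaczStep_eq (τ : Finset E) (hind : IsIndepEdgeSet hd tl τ) (x : V → ℝ) :
    kaczStep Q 0 τ x =
      x - (2:ℝ)⁻¹ • ((rowSub Q τ)ᵀ *ᵥ (rowSub Q τ *ᵥ x)) := by
  have hm : mpinv (rowSub Q τ) = (2:ℝ)⁻¹ • (rowSub Q τ)ᵀ :=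
    mpinv_of_orth_rows _ (gram_eq hQ τ hind)
  rw [kaczStep, hm]
  have hb : (fun i : τ => (0 : E → ℝ) i.1 - (rowSub Q τ).mulVec x i)
      = -(rowSub Q τ *ᵥ x) := by
    funext i; simp
  rw [hb, Matrix.mulVec_neg, Matrix.smul_mulVec]
  funext v
  simp [sub_eq_add_neg]

lemma kaczStep_sum (τ : Finset E) (hind : IsIndepEdgeSet hd tl τ) (x : V → ℝ) :
    ∑ v, kaczStep Q 0 τ x v = ∑ v, x v := by
  rw [kaczStep_eq hQ τ hind]
  simp only [Pi.sub_apply, Pi.smul_apply, smul_eq_mul, Finset.sum_sub_distrib, ← Finset.mul_sum]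
  rw [sum_transpose_mulVec hQ]
  ring

end Graph

/-! ### Main theorem -/

/-- **Corollary (block gossip with independent edge set blocks).** If `G` is connected
with oriented incidence matrix `Q` and `T = (τ_1, …, τ_d)` is a covering of the edges of
`G` by independent edge sets, with `r` the minimum number of blocks containing any single
edge, then block gossip (expectation = average over all uniform i.i.d. block choice
sequences) satisfies `E‖c_k − c*‖² ≤ (1 − r α(G)/(2d))ᵏ ‖c − c*‖²`, where `c* = mean(c)·1`
and the algebraic connectivity `α(G)` is the smallest nonzero eigenvalue of `L = QᵀQ`. -/
theorem block_gossip_indep_edge_sets {V E : Type*} [Fintype V] [DecidableEq V]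
    [Fintype E] [DecidableEq E] {d : ℕ}
    (G : SimpleGraph V) (hG : G.Connected)
    (hd tl : E → V) (Q : Matrix E V ℝ) (hQ : IsOrientedIncidence G hd tl Q)
    (τs : Fin d → Finset E)
    (hcover : ∀ e : E, ∃ l, e ∈ τs l)
    (hindep : ∀ l, IsIndepEdgeSet hd tl (τs l))
    (r : ℕ)
    (hr_le : ∀ e : E, r ≤ (Finset.univ.filter fun l => e ∈ τs l).card)
    (hr_att : ∃ e : E, (Finset.univ.filter fun l => e ∈ τs l).card = r)
    (c cstar : V → ℝ)
    (hcstar : cstar = fun _ => (∑ v, c v) / (Fintype.card V : ℝ)) :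
    ∀ k : ℕ,
      (∑ σ : Fin k → Fin d, sqNorm (kaczIter Q 0 τs c k σ - cstar)) / (d : ℝ) ^ k ≤
        (1 - (r : ℝ) * lambdaMinPos (Qᵀ * Q) / (2 * d)) ^ k * sqNorm (c - cstar) := by
  classical
  have hVne : Nonempty V := hG.nonempty
  set α := lambdaMinPos (Qᵀ * Q) with hα
  set ρ : ℝ := 1 - (r : ℝ) * α / (2 * d) with hρ
  by_cases hcard : Fintype.card V ≤ 1
  -- Degenerate case: a single vertex, no edges.
  · have hc1 : Fintype.card V = 1 := le_antisymm hcard Fintype.card_pos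
    obtain ⟨v0, hv0⟩ := Fintype.card_eq_one_iff.mp hc1
    have hEempty : IsEmpty E := by
      constructor
      intro e
      exact hd_ne_tl hQ e ((hv0 (hd e)).trans (hv0 (tl e)).symm)
    have hccstar : c = cstar := by
      funext v
      rw [hcstar, hc1]
      have : ∑ w, c w = c v := by
        rw [show (Finset.univ : Finset V) = {v} from Finset.eq_singleton_iff_unique_mem.mpr
          ⟨Finset.mem_univ v, fun w _ => (hv0 w).trans (hv0 v).symm⟩, Finset.sum_singleton]
      rw [this]
      norm_num
    have hstep : ∀ τ x, kaczStep Q 0 τ x = x := by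
      intro τ x
      funext v
      have hmv : ∀ y : (↥τ : Type _) → ℝ, (mpinv (rowSub Q τ) *ᵥ y) v = 0 := by
        intro y
        rw [mulVec, dotProduct]
        have : IsEmpty (↥τ : Type _) := ⟨fun i => hEempty.false i.1⟩
        simp
      simp [kaczStep, hmv]
    have hiter : ∀ k (σ : Fin k → Fin d), kaczIter Q 0 τs c k σ = c := by
      intro k
      induction k with
      | zero => intro σ; rfl
      | succ k ih => intro σ; rw [kaczIter, hstep, ih]
    intro k
    have hnum : ∀ σ : Fin k → Fin d, sqNorm (kaczIter Q 0 τs c k σ - cstar) = 0 := by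
      intro σ
      rw [hiter, hccstar]
      simp [sqNorm]
    rw [Finset.sum_congr rfl fun σ _ => hnum σ, Finset.sum_const, smul_zero, zero_div]
    have : sqNorm (c - cstar) = 0 := by rw [hccstar]; simp [sqNorm]
    rw [this, mul_zero]
  -- Main case: at least two vertices.
  · push_neg at hcard
    have hker := mulVec_zero_const hQ hG
    -- there is an edge, hence `d > 0`
    have hd_pos : 0 < d := by
      obtain ⟨a, b, hab⟩ : ∃ a b, G.Adj a b := by
        obtain ⟨a, b, hne⟩ := Fintype.exists_pair_of_one_lt_card hcard
        obtain ⟨w⟩ := hG.preconnected a b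
        cases w with
        | nil => exact absurd rfl hne
        | cons h p => exact ⟨_, _, h⟩
      obtain ⟨e, -, -⟩ := hQ.2.1 a b hab
      obtain ⟨l, -⟩ := hcover e
      exact Fin.pos_iff_nonempty.mpr ⟨l⟩
    have hdR : (0:ℝ) < (d:ℝ) := by exact_mod_cast hd_pos
    -- key averaged bound for any mean-zero vector
    have key : ∀ w : V → ℝ, (∑ v, w v) = 0 →
        (∑ l : Fin d, (sqNorm w - (2:ℝ)⁻¹ * sqNorm (rowSub Q (τs l) *ᵥ w)))
          ≤ (d:ℝ) * ρ * sqNorm w := by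
      intro w hw
      have hcount : (r:ℝ) * sqNorm (Q *ᵥ w) ≤ ∑ l : Fin d, sqNorm (rowSub Q (τs l) *ᵥ w) := by
        have hsub : ∀ l, sqNorm (rowSub Q (τs l) *ᵥ w) = ∑ e ∈ τs l, ((Q *ᵥ w) e)^2 := by
          intro l
          rw [sqNorm, ← Finset.sum_coe_sort (τs l) (fun e => ((Q *ᵥ w) e)^2)]
          rfl
        calc (r:ℝ) * sqNorm (Q *ᵥ w) = ∑ e, (r:ℝ) * ((Q *ᵥ w) e)^2 := by
              rw [sqNorm, Finset.mul_sum]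
        _ ≤ ∑ e, ((Finset.univ.filter fun l => e ∈ τs l).card : ℝ) * ((Q *ᵥ w) e)^2 := by
              refine Finset.sum_le_sum fun e _ => mul_le_mul_of_nonneg_right ?_ (sq_nonneg _)
              exact_mod_cast hr_le e
        _ = ∑ e, ∑ l : Fin d, (if e ∈ τs l then ((Q *ᵥ w) e)^2 else 0) := by
              refine Finset.sum_congr rfl fun e _ => ?_
              rw [← Finset.sum_filter, Finset.sum_const, nsmul_eq_mul]
        _ = ∑ l : Fin d, ∑ e, (if e ∈ τs l then ((Q *ᵥ w) e)^2 else 0) := Finset.sum_comm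
        _ = ∑ l : Fin d, sqNorm (rowSub Q (τs l) *ᵥ w) := by
              refine Finset.sum_congr rfl fun l _ => ?_
              rw [hsub l, Finset.sum_ite_mem, Finset.univ_inter]
      have hquad : α * sqNorm w ≤ sqNorm (Q *ᵥ w) := quad_lower_bound Q hker w hw
      have hrnn : (0:ℝ) ≤ (r:ℝ) := Nat.cast_nonneg r
      calc (∑ l : Fin d, (sqNorm w - (2:ℝ)⁻¹ * sqNorm (rowSub Q (τs l) *ᵥ w)))
          = (d:ℝ) * sqNorm w
            - (2:ℝ)⁻¹ * ∑ l : Fin d, sqNorm (rowSub Q (τs l) *ᵥ w) := by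
            rw [Finset.sum_sub_distrib, Finset.sum_const, Finset.card_univ, Fintype.card_fin,
              nsmul_eq_mul, ← Finset.mul_sum]
      _ ≤ (d:ℝ) * sqNorm w - (2:ℝ)⁻¹ * ((r:ℝ) * sqNorm (Q *ᵥ w)) := by
            have := mul_le_mul_of_nonneg_left hcount (by norm_num : (0:ℝ) ≤ (2:ℝ)⁻¹)
            linarith
      _ ≤ (d:ℝ) * sqNorm w - (2:ℝ)⁻¹ * ((r:ℝ) * (α * sqNorm w)) := by
            have := mul_le_mul_of_nonneg_left hquad hrnn
            nlinarith [mul_le_mul_of_nonneg_left (mul_le_mul_of_nonneg_left hquad hrnn)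
              (by norm_num : (0:ℝ) ≤ (2:ℝ)⁻¹)]
      _ = (d:ℝ) * ρ * sqNorm w := by
            rw [hρ]
            field_simp
    -- each summand in `key` is nonnegative
    have keynn : ∀ (l : Fin d) (w : V → ℝ),
        0 ≤ sqNorm w - (2:ℝ)⁻¹ * sqNorm (rowSub Q (τs l) *ᵥ w) := by
      intro l w
      rw [← step_sqNorm (rowSub Q (τs l)) (gram_eq hQ (τs l) (hindep l)) w]
      exact sqNorm_nonneg _
    -- ρ is nonnegative
    have hρnn : (0:ℝ) ≤ ρ := by
      obtain ⟨a, b, hne⟩ := Fintype.exists_pair_of_one_lt_card hcard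
      set w : V → ℝ := Pi.single a 1 - Pi.single b 1 with hwdef
      have hwsum : ∑ v, w v = 0 := by
        simp [hwdef, Finset.sum_sub_distrib, Finset.sum_pi_single']
      have hwpos : 0 < sqNorm w := by
        have hwa : w a = 1 := by
          simp [hwdef, Pi.single_apply, hne]
        have h1 : (1:ℝ) ≤ sqNorm w := by
          have := Finset.single_le_sum (f := fun v => (w v)^2)
            (fun v _ => sq_nonneg _) (Finset.mem_univ a)
          simpa [sqNorm, hwa] using this
        linarith
      have h0 : (0:ℝ) ≤ (d:ℝ) * ρ * sqNorm w :=
        le_trans (Finset.sum_nonneg fun l _ => keynn l w) (key w hwsum)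
      by_contra hneg
      push_neg at hneg
      have : (d:ℝ) * ρ * sqNorm w < 0 :=
        mul_neg_of_neg_of_pos (mul_neg_of_pos_of_neg hdR hneg) hwpos
      linarith
    have hdρnn : (0:ℝ) ≤ (d:ℝ) * ρ := mul_nonneg (le_of_lt hdR) hρnn
    -- sum of cstar
    have hsumcstar : ∑ v, cstar v = ∑ v, c v := by
      rw [hcstar, Finset.sum_const, Finset.card_univ, nsmul_eq_mul]
      field_simp
    -- rowSub applied to cstar vanishes
    have hAcstar : ∀ τ : Finset E, rowSub Q τ *ᵥ cstar = 0 := by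
      intro τ
      funext e
      have : (rowSub Q τ *ᵥ cstar) e = (Q *ᵥ cstar) e.1 := rfl
      rw [this, mulVec_apply_eq hQ, hcstar]
      simp
    -- per-step bound
    have step_bound : ∀ x : V → ℝ, (∑ v, x v) = (∑ v, c v) →
        (∑ l : Fin d, sqNorm (kaczStep Q 0 (τs l) x - cstar))
          ≤ (d:ℝ) * ρ * sqNorm (x - cstar) := by
      intro x hx
      set w : V → ℝ := x - cstar with hwdef
      have hwsum : ∑ v, w v = 0 := by
        rw [hwdef]
        simp only [Pi.sub_apply, Finset.sum_sub_distrib]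
        rw [hx, hsumcstar]
        ring
      have hAx : ∀ τ : Finset E, rowSub Q τ *ᵥ x = rowSub Q τ *ᵥ w := by
        intro τ
        have hxw : x = w + cstar := by rw [hwdef]; ring
        rw [hxw, Matrix.mulVec_add, hAcstar, add_zero]
      have hterm : ∀ l : Fin d, sqNorm (kaczStep Q 0 (τs l) x - cstar)
          = sqNorm w - (2:ℝ)⁻¹ * sqNorm (rowSub Q (τs l) *ᵥ w) := by
        intro l
        have hstep := kaczStep_eq hQ (τs l) (hindep l) x
        have : kaczStep Q 0 (τs l) x - cstar
            = w - (2:ℝ)⁻¹ • ((rowSub Q (τs l))ᵀ *ᵥ (rowSub Q (τs l) *ᵥ w)) := by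
          rw [hstep, hAx (τs l), hwdef]
          ring
        rw [this, step_sqNorm (rowSub Q (τs l)) (gram_eq hQ (τs l) (hindep l)) w]
      rw [Finset.sum_congr rfl fun l _ => hterm l]
      exact key w hwsum
    -- main induction
    have main : ∀ k : ℕ,
        (∀ σ : Fin k → Fin d, ∑ v, kaczIter Q 0 τs c k σ v = ∑ v, c v) ∧
        (∑ σ : Fin k → Fin d, sqNorm (kaczIter Q 0 τs c k σ - cstar))
          ≤ ((d:ℝ) * ρ)^k * sqNorm (c - cstar) := by
      intro k
      induction k with
      | zero =>
        constructor
        · intro σ; rfl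
        · rw [Fintype.sum_unique fun σ : Fin 0 → Fin d => sqNorm (kaczIter Q 0 τs c 0 σ - cstar)]
          simp [kaczIter]
      | succ k ih =>
        obtain ⟨ihmean, ihsum⟩ := ih
        constructor
        · intro σ
          rw [kaczIter, kaczStep_sum hQ _ (hindep _), ihmean]
        · have hsplit : (∑ σ : Fin (k+1) → Fin d, sqNorm (kaczIter Q 0 τs c (k+1) σ - cstar))
              = ∑ p : Fin d × (Fin k → Fin d),
                  sqNorm (kaczStep Q 0 (τs p.1) (kaczIter Q 0 τs c k p.2) - cstar) := by
            rw [← Fintype.sum_equiv (Fin.snocEquiv (fun _ => Fin d))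
              (fun p => sqNorm (kaczStep Q 0 (τs p.1) (kaczIter Q 0 τs c k p.2) - cstar))
              (fun σ => sqNorm (kaczIter Q 0 τs c (k+1) σ - cstar))]
            intro p
            have h1 : (Fin.snocEquiv (fun _ => Fin d) p) (Fin.last k) = p.1 := by
              simp [Fin.snocEquiv]
            have h2 : (Fin.snocEquiv (fun _ => Fin d) p) ∘ Fin.castSucc = p.2 := by
              funext j
              simp [Fin.snocEquiv]
            rw [kaczIter, h1, h2]
          rw [hsplit, Fintype.sum_prod_type, Finset.sum_comm]
          calc ∑ τ : Fin k → Fin d, ∑ l : Fin d,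
                sqNorm (kaczStep Q 0 (τs l) (kaczIter Q 0 τs c k τ) - cstar)
              ≤ ∑ τ : Fin k → Fin d, (d:ℝ) * ρ * sqNorm (kaczIter Q 0 τs c k τ - cstar) :=
                Finset.sum_le_sum fun τ _ => step_bound _ (ihmean τ)
          _ = (d:ℝ) * ρ * ∑ τ : Fin k → Fin d, sqNorm (kaczIter Q 0 τs c k τ - cstar) := by
                rw [Finset.mul_sum]
          _ ≤ (d:ℝ) * ρ * (((d:ℝ) * ρ)^k * sqNorm (c - cstar)) :=
                mul_le_mul_of_nonneg_left ihsum hdρnn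
          _ = ((d:ℝ) * ρ)^(k+1) * sqNorm (c - cstar) := by ring
    intro k
    rw [div_le_iff₀ (by positivity : (0:ℝ) < (d:ℝ)^k)]
    calc (∑ σ : Fin k → Fin d, sqNorm (kaczIter Q 0 τs c k σ - cstar))
        ≤ ((d:ℝ) * ρ)^k * sqNorm (c - cstar) := (main k).2
    _ = ρ^k * sqNorm (c - cstar) * (d:ℝ)^k := by rw [mul_pow]; ring

end
end

section
/- Let A ∈ ℝ^{m×n}, b ∈ ℝ^m, e = A x_e − b for some x_e ∈ ℝ^n, and x* = (I − A†A)x_0 + A†(b + e), where x_0 ∈ ℝ^n. Then A x* − b = e. Moreover, for any subset τ ⊆ [m] of row indices and any x_j ∈ ℝ^n, the updated point x_{j+1} = x_j + A_τ†(b_τ − A_τ x_j) satisfies ‖x_{j+1} − x*‖² = ‖(I − A_τ† A_τ)(x_j − x*)‖² + ‖A_τ† e_τ‖². -/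
open Matrix

noncomputable section

lemma symm_pinv {n : Type*} [Fintype n] [DecidableEq n] (M : Matrix n n ℝ)
    (hM : M.IsHermitian) :
    ∃ N : Matrix n n ℝ, M * N * M = M ∧ N * M * N = N ∧ N.IsHermitian ∧ M * N = N * M := by
  set U : Matrix n n ℝ := (hM.eigenvectorUnitary : Matrix n n ℝ) with hU
  set d : n → ℝ := RCLike.ofReal ∘ hM.eigenvalues with hd
  have hUU : star U * U = 1 := (Matrix.mem_unitaryGroup_iff').mp hM.eigenvectorUnitary.2
  have hspec : M = U * diagonal d * star U := hM.spectral_theorem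
  have key : ∀ f g : n → ℝ, (U * diagonal f * star U) * (U * diagonal g * star U)
      = U * diagonal (fun i => f i * g i) * star U := by
    intro f g
    rw [show U * diagonal f * star U * (U * diagonal g * star U)
        = U * (diagonal f * (star U * U) * diagonal g) * star U by noncomm_ring, hUU,
      mul_one, diagonal_mul_diagonal]
  have hdiag : ∀ F G : n → ℝ, (∀ i, F i = G i) →
      (U * diagonal F * star U) = U * diagonal G * star U := by
    intro F G h
    rw [show F = G from funext h]
  have hform : ∀ f : n → ℝ, ((U * diagonal f * star U) : Matrix n n ℝ).IsHermitian := by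
    intro f
    unfold Matrix.IsHermitian
    simp [conjTranspose_mul, diagonal_conjTranspose, mul_assoc, Matrix.star_eq_conjTranspose,
      Matrix.conjTranspose_eq_transpose_of_trivial, Matrix.transpose_transpose]
  refine ⟨U * diagonal (fun i => (d i)⁻¹) * star U, ?_, ?_, hform _, ?_⟩
  · rw [hspec, key, key]
    refine hdiag _ _ fun i => ?_
    rcases eq_or_ne (d i) 0 with h | h
    · simp [h]
    · field_simp
  · rw [hspec, key, key]
    refine hdiag _ _ fun i => ?_
    rcases eq_or_ne (d i) 0 with h | h
    · simp [h]
    · field_simp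
  · rw [hspec, key, key]
    exact hdiag _ _ fun i => mul_comm _ _

lemma exists_mpinv {m n : Type*} [Fintype m] [Fintype n] (A : Matrix m n ℝ) :
    ∃ B : Matrix n m ℝ,
      A * B * A = A ∧ B * A * B = B ∧ (A * B)ᵀ = A * B ∧ (B * A)ᵀ = B * A := by
  classical
  obtain ⟨N, h1, h2, h3, h4⟩ := symm_pinv (Aᴴ * A) (isHermitian_conjTranspose_mul_self A)
  have hANM : A * (N * (Aᴴ * A)) = A := by
    have hz : Aᴴ * A * (N * (Aᴴ * A) - 1) = 0 := by
      rw [mul_sub, mul_one, ← mul_assoc, h1, sub_self]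
    rw [conjTranspose_mul_self_mul_eq_zero, Matrix.mul_sub, Matrix.mul_one, sub_eq_zero] at hz
    exact hz
  refine ⟨N * Aᴴ, ?_, ?_, ?_, ?_⟩
  · calc A * (N * Aᴴ) * A = A * (N * (Aᴴ * A)) := by simp only [Matrix.mul_assoc]
      _ = A := hANM
  · calc N * Aᴴ * A * (N * Aᴴ) = N * (Aᴴ * A) * N * Aᴴ := by simp only [Matrix.mul_assoc]
      _ = N * Aᴴ := by rw [h2]
  · have hNt : Nᵀ = N := by
      rw [← conjTranspose_eq_transpose_of_trivial]; exact h3.eq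
    rw [← conjTranspose_eq_transpose_of_trivial]
    simp [conjTranspose_mul, hNt, Matrix.mul_assoc, conjTranspose_eq_transpose_of_trivial]
  · rw [← conjTranspose_eq_transpose_of_trivial]
    simp only [conjTranspose_mul, conjTranspose_conjTranspose, h3.eq]
    rw [← Matrix.mul_assoc, h4, ← Matrix.mul_assoc]

lemma mpinv_spec {m n : Type*} [Fintype m] [Fintype n] (A : Matrix m n ℝ) :
    A * mpinv A * A = A ∧ mpinv A * A * mpinv A = mpinv A ∧
      (A * mpinv A)ᵀ = A * mpinv A ∧ (mpinv A * A)ᵀ = mpinv A * A := by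
  rw [mpinv, dif_pos (exists_mpinv A)]
  exact (exists_mpinv A).choose_spec

lemma sqNorm_sub_of_dot {k : Type*} [Fintype k] (u v : k → ℝ) (h : u ⬝ᵥ v = 0) :
    sqNorm (u - v) = sqNorm u + sqNorm v := by
  simp only [sqNorm, dotProduct] at *
  have hterm : ∀ i : k, (u - v) i ^ 2 = (u i ^ 2 + v i ^ 2) - 2 * (u i * v i) := by
    intro i; simp [Pi.sub_apply]; ring
  simp_rw [hterm]
  rw [Finset.sum_sub_distrib, Finset.sum_add_distrib, ← Finset.mul_sum, h, mul_zero, sub_zero]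

/-- **Lemma (residual identity and orthogonal error decomposition).** With
`e = A x_e − b` and `x* = (I − A†A)x_0 + A†(b + e)`, we have `A x* − b = e`; moreover,
for any row subset `τ` and any point `x_j`, the updated point
`x_{j+1} = x_j + A_τ†(b_τ − A_τ x_j)` satisfies
`‖x_{j+1} − x*‖² = ‖(I − A_τ† A_τ)(x_j − x*)‖² + ‖A_τ† e_τ‖²`. -/
theorem kaczmarz_error_decomposition {m n : ℕ}
    (A : Matrix (Fin m) (Fin n) ℝ) (b : Fin m → ℝ)
    (xe : Fin n → ℝ) (e : Fin m → ℝ) (he : e = A.mulVec xe - b)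
    (x0 xstar : Fin n → ℝ)
    (hxstar : xstar = (x0 - (mpinv A).mulVec (A.mulVec x0)) + (mpinv A).mulVec (b + e)) :
    A.mulVec xstar - b = e ∧
      ∀ (τ : Finset (Fin m)) (xj : Fin n → ℝ),
        sqNorm (kaczStep A b τ xj - xstar) =
          sqNorm (((1 : Matrix (Fin n) (Fin n) ℝ) -
              mpinv (rowSub A τ) * rowSub A τ).mulVec (xj - xstar)) +
            sqNorm ((mpinv (rowSub A τ)).mulVec fun i : τ => e i.1) := by
  have hb : b + e = A.mulVec xe := by rw [he]; abel
  have hADA : ∀ v : Fin n → ℝ, A.mulVec ((mpinv A).mulVec (A.mulVec v)) = A.mulVec v := by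
    intro v
    rw [mulVec_mulVec, mulVec_mulVec, (mpinv_spec A).1]
  have h1 : A.mulVec xstar - b = e := by
    rw [hxstar, mulVec_add, mulVec_sub, hb, hADA x0, hADA xe, ← hb]
    abel
  refine ⟨h1, fun τ xj => ?_⟩
  set Aτ : Matrix τ (Fin n) ℝ := rowSub A τ with hAτ
  set B : Matrix (Fin n) τ ℝ := mpinv Aτ with hB
  obtain ⟨p1, p2, p3, p4⟩ := mpinv_spec Aτ
  set w : Fin n → ℝ := xj - xstar with hw
  set eτ : τ → ℝ := fun i : τ => e i.1 with heτ
  have hres : (fun i : τ => b i.1 - Aτ.mulVec xj i) = -eτ - Aτ.mulVec w := by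
    funext i
    have hi : A.mulVec xstar i.1 - b i.1 = e i.1 := congrFun h1 i.1
    have hAx : ∀ x : Fin n → ℝ, Aτ.mulVec x i = A.mulVec x i.1 := fun _ => rfl
    simp only [Pi.sub_apply, Pi.neg_apply, heτ, hw, hAx, mulVec_sub, Pi.sub_apply]
    linarith
  have hdiff : kaczStep A b τ xj - xstar =
      ((1 : Matrix (Fin n) (Fin n) ℝ) - B * Aτ).mulVec w - B.mulVec eτ := by
    rw [kaczStep, ← hAτ, ← hB, hres, mulVec_sub, mulVec_neg, Matrix.sub_mulVec,
      Matrix.one_mulVec, mulVec_mulVec]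
    rw [hw]
    abel
  rw [hdiff]
  apply sqNorm_sub_of_dot
  have q2 : B * Aτ * B = B := p2
  have q4 : (B * Aτ)ᵀ = B * Aτ := p4
  have hq : B * Aτ * (B * Aτ) = B * Aτ := by rw [← Matrix.mul_assoc, q2]
  have hBe : B.mulVec eτ = (B * Aτ).mulVec (B.mulVec eτ) := by
    rw [mulVec_mulVec, q2]
  rw [hBe, Matrix.dotProduct_mulVec, ← Matrix.mulVec_transpose, q4, mulVec_mulVec,
    Matrix.mul_sub, Matrix.mul_one, hq, sub_self, Matrix.zero_mulVec,
    zero_dotProduct]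

end
end
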